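/- arXiv:2310.12130 — 3 statements merged into one kernel-verified Lean document; each statement's English description precedes it below -/
import Mathlib

section
/- Let λ_1,…,λ_n and λ̃_1,…,λ̃_n ∈ ℂ^k, K_j = λ_j λ̃_j^T, and 𝔰_J = det(Σ_{j∈J} K_j) for k-element subsets J ⊆ {1,…,n}. If the matrix K_1 + … + K_n has rank at most k−2 (momentum conservation), then for every fixed index j ∈ {1,…,n}, the sum Σ_{J ∋ j, |J|=k} 𝔰_J = 0. -/
open Matrix Finset Module

private lemma myRank_add_le {k : ℕ} (A B : Matrix (Fin k) (Fin k) ℂ) :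
    (A + B).rank ≤ A.rank + B.rank := by
  have hle : LinearMap.range (A + B).mulVecLin ≤
      LinearMap.range A.mulVecLin ⊔ LinearMap.range B.mulVecLin := by
    rw [Matrix.mulVecLin_add]
    rintro x ⟨y, rfl⟩
    exact Submodule.add_mem_sup ⟨y, rfl⟩ ⟨y, rfl⟩
  have h2 := Submodule.finrank_add_le_finrank_add_finrank
    (LinearMap.range A.mulVecLin) (LinearMap.range B.mulVecLin)
  have h3 := Submodule.finrank_mono (R := ℂ) hle
  exact le_trans h3 h2

private lemma myRank_vecMulVec_le {k : ℕ} (w v : Fin k → ℂ) :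
    (Matrix.vecMulVec w v).rank ≤ 1 := by
  have hle : LinearMap.range (Matrix.vecMulVec w v).mulVecLin ≤
      Submodule.span ℂ {w} := by
    rintro x ⟨y, rfl⟩
    have : (Matrix.vecMulVec w v).mulVecLin y = (v ⬝ᵥ y) • w := by
      ext i
      simp only [Matrix.mulVecLin_apply, Matrix.mulVec, Matrix.vecMulVec_apply,
        dotProduct, Pi.smul_apply, smul_eq_mul, Finset.sum_mul]
      exact Finset.sum_congr rfl fun x _ => by ring
    rw [this]
    exact Submodule.smul_mem _ _ (Submodule.mem_span_singleton_self w)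
  calc (Matrix.vecMulVec w v).rank
      ≤ finrank ℂ (Submodule.span ℂ {w}) := Submodule.finrank_mono hle
    _ ≤ 1 := by
        by_cases hw : w = 0
        · subst hw
          rw [Submodule.span_zero_singleton]
          simp
        · exact le_of_eq (finrank_span_singleton hw)

private lemma det_zero_of_rank_lt {k : ℕ} (A : Matrix (Fin k) (Fin k) ℂ)
    (h : A.rank < k) : A.det = 0 := by
  by_contra hd
  have : A.rank = k := by
    have := Matrix.rank_of_isUnit A ((Matrix.isUnit_iff_isUnit_det A).2 (isUnit_iff_ne_zero.2 hd))
    simpa using this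
  omega

/-- Expansion of the determinant of a sum of rank-one matrices. -/
private lemma det_sum_expand {k n : ℕ} (lam lamT : Fin n → Fin k → ℂ) (S : Finset (Fin n)) :
    (∑ i ∈ S, Matrix.vecMulVec (lam i) (lamT i)).det
      = ∑ J ∈ S.powersetCard k, (∑ i ∈ J, Matrix.vecMulVec (lam i) (lamT i)).det := by
  classical
  set T : (Fin k → Fin n) → ℂ :=
    fun r => (∏ i, lam (r i) i) * Matrix.detRowAlternating (fun i => lamT (r i)) with hT
  have expand : ∀ S' : Finset (Fin n),
      (∑ i ∈ S', Matrix.vecMulVec (lam i) (lamT i)).det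
        = ∑ r ∈ (Fintype.piFinset fun _ : Fin k => S').filter Function.Injective, T r := by
    intro S'
    have h1 : (∑ i ∈ S', Matrix.vecMulVec (lam i) (lamT i)).det
        = Matrix.detRowAlternating (fun i => ∑ j ∈ S', lam j i • lamT j) := by
      congr 1
      ext i c
      simp [Matrix.sum_apply, Matrix.vecMulVec_apply]
    rw [h1]
    rw [show (Matrix.detRowAlternating (fun i => ∑ j ∈ S', lam j i • lamT j))
        = Matrix.detRowAlternating.toMultilinearMap (fun i => ∑ j ∈ S', lam j i • lamT j) from rfl]
    rw [MultilinearMap.map_sum_finset Matrix.detRowAlternating.toMultilinearMap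
      (fun i j => lam j i • lamT j) (fun _ => S')]
    rw [← Finset.sum_filter_add_sum_filter_not (Fintype.piFinset fun _ : Fin k => S')
      Function.Injective]
    have hz : ∑ r ∈ (Fintype.piFinset fun _ : Fin k => S').filter
        (fun r => ¬ Function.Injective r),
        Matrix.detRowAlternating.toMultilinearMap (fun i => lam (r i) i • lamT (r i)) = 0 := by
      refine Finset.sum_eq_zero fun r hr => ?_
      simp only [Finset.mem_filter] at hr
      rw [Function.not_injective_iff] at hr
      obtain ⟨a, b, hab, hne⟩ := hr.2
      have : Matrix.detRowAlternating.toMultilinearMap (fun i => lam (r i) i • lamT (r i))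
          = (∏ i, lam (r i) i) • Matrix.detRowAlternating (fun i => lamT (r i)) := by
        rw [MultilinearMap.map_smul_univ]
        rfl
      rw [this, Matrix.detRowAlternating.map_eq_zero_of_eq _ (by rw [hab]) hne, smul_zero]
    rw [hz, add_zero]
    refine Finset.sum_congr rfl fun r _ => ?_
    have : Matrix.detRowAlternating.toMultilinearMap (fun i => lam (r i) i • lamT (r i))
        = (∏ i, lam (r i) i) • Matrix.detRowAlternating (fun i => lamT (r i)) := by
      rw [MultilinearMap.map_smul_univ]
      rfl
    rw [this, hT]
    simp [smul_eq_mul]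
  rw [expand S]
  have hR : ∀ J ∈ S.powersetCard k,
      (∑ i ∈ J, Matrix.vecMulVec (lam i) (lamT i)).det
        = ∑ r ∈ ((Fintype.piFinset fun _ : Fin k => S).filter Function.Injective).filter
            (fun r => Finset.image r Finset.univ = J), T r := by
    intro J hJ
    rw [Finset.mem_powersetCard] at hJ
    rw [expand J]
    congr 1
    ext r
    simp only [Finset.mem_filter, Fintype.mem_piFinset, Finset.filter_filter]
    constructor
    · rintro ⟨hmem, hinj⟩
      have hsub : Finset.image r Finset.univ ⊆ J := by
        intro x hx
        obtain ⟨i, _, rfl⟩ := Finset.mem_image.1 hx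
        exact hmem i
      have hcard : (Finset.image r Finset.univ).card = J.card := by
        rw [Finset.card_image_of_injective _ hinj, Finset.card_univ, Fintype.card_fin, hJ.2]
      exact ⟨fun i => hJ.1 (hmem i), hinj, Finset.eq_of_subset_of_card_le hsub hcard.ge⟩
    · rintro ⟨hmem, hinj, himg⟩
      refine ⟨fun i => ?_, hinj⟩
      rw [← himg]
      exact Finset.mem_image_of_mem r (Finset.mem_univ i)
  rw [Finset.sum_congr rfl hR]
  have hmaps : ∀ r ∈ (Fintype.piFinset fun _ : Fin k => S).filter Function.Injective,
      Finset.image r Finset.univ ∈ S.powersetCard k := by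
    intro r hr
    simp only [Finset.mem_filter, Fintype.mem_piFinset] at hr
    rw [Finset.mem_powersetCard]
    constructor
    · intro x hx
      obtain ⟨i, _, rfl⟩ := Finset.mem_image.1 hx
      exact hr.1 i
    · rw [Finset.card_image_of_injective _ hr.2, Finset.card_univ, Fintype.card_fin]
  exact (Finset.sum_fiberwise_of_maps_to hmaps T).symm

/-- Momentum conservation for CEGM invariants: if `K_j = λ_j λ̃_j^T` and
`K_1 + ⋯ + K_n` has rank at most `k − 2`, then for every fixed index `j`,
`∑_{J ∋ j, |J| = k} 𝔰_J = 0`, where `𝔰_J = det (∑_{i∈J} K_i)`. -/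
theorem stmt1 (k n : ℕ) (hk : 2 ≤ k) (lam lamT : Fin n → Fin k → ℂ)
    (K : Fin n → Matrix (Fin k) (Fin k) ℂ)
    (hK : ∀ j, K j = Matrix.vecMulVec (lam j) (lamT j))
    (hmom : Matrix.rank (∑ j, K j) ≤ k - 2) (j : Fin n) :
    ∑ J ∈ (Finset.powersetCard k (Finset.univ : Finset (Fin n))).filter (fun J => j ∈ J),
      Matrix.det (∑ i ∈ J, K i) = 0 := by
  classical
  have hKfun : ∀ S : Finset (Fin n), (∑ i ∈ S, K i)
      = ∑ i ∈ S, Matrix.vecMulVec (lam i) (lamT i) :=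
    fun S => Finset.sum_congr rfl fun i _ => hK i
  -- determinant of the full sum vanishes
  have hdet_full : (∑ i, K i).det = 0 :=
    det_zero_of_rank_lt _ (lt_of_le_of_lt hmom (by omega))
  -- determinant of the sum over `univ.erase j` vanishes
  have hdet_erase : (∑ i ∈ Finset.univ.erase j, K i).det = 0 := by
    apply det_zero_of_rank_lt
    have hsum : (∑ i ∈ Finset.univ.erase j, K i) = (∑ i, K i) + (- K j) := by
      rw [← Finset.sum_erase_add Finset.univ K (Finset.mem_univ j)]
      abel
    rw [hsum]
    have h1 : (- K j).rank ≤ 1 := by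
      have : - K j = Matrix.vecMulVec (- lam j) (lamT j) := by
        rw [hK j]
        ext a b
        simp [Matrix.vecMulVec]
      rw [this]
      exact myRank_vecMulVec_le _ _
    calc ((∑ i, K i) + (- K j)).rank ≤ (∑ i, K i).rank + (- K j).rank := myRank_add_le _ _
      _ ≤ (k - 2) + 1 := add_le_add hmom h1
      _ < k := by omega
  -- expansions
  have hexp : ∀ S : Finset (Fin n),
      (∑ i ∈ S, K i).det = ∑ J ∈ S.powersetCard k, (∑ i ∈ J, K i).det := by
    intro S
    rw [hKfun S, det_sum_expand lam lamT S]
    exact Finset.sum_congr rfl fun J _ => by rw [hKfun J]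
  have hsplit := Finset.sum_filter_add_sum_filter_not
    (Finset.powersetCard k (Finset.univ : Finset (Fin n))) (fun J => j ∈ J)
    (fun J => (∑ i ∈ J, K i).det)
  have hnot : (Finset.powersetCard k (Finset.univ : Finset (Fin n))).filter (fun J => ¬ j ∈ J)
      = (Finset.univ.erase j).powersetCard k := by
    ext J
    simp only [Finset.mem_filter, Finset.mem_powersetCard, Finset.subset_erase]
    tauto
  have h1 : ∑ J ∈ Finset.powersetCard k (Finset.univ : Finset (Fin n)),
      (∑ i ∈ J, K i).det = 0 := by
    rw [← hexp Finset.univ]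
    exact hdet_full
  have h2 : ∑ J ∈ (Finset.powersetCard k (Finset.univ : Finset (Fin n))).filter
      (fun J => ¬ j ∈ J), (∑ i ∈ J, K i).det = 0 := by
    rw [hnot, ← hexp (Finset.univ.erase j)]
    exact hdet_erase
  rw [h2, h1] at hsplit
  simpa using hsplit
end

section
/- Let p_J denote the 3×3 minors of a generic 3×6 real matrix (all maximal minors nonzero). Then the following identity of rational functions holds: p_{124}p_{125}/(p_{123}p_{126}p_{134}p_{145}p_{156}p_{234}p_{245}p_{256}) + p_{124}/(p_{126}p_{134}p_{145}p_{165}p_{234}p_{236}p_{245}) + p_{124}/(p_{123}p_{134}p_{145}p_{156}p_{234}p_{246}p_{265}) + p_{124}/(p_{123}p_{134}p_{145}p_{156}p_{236}p_{245}p_{264}) = 0, where p with a reordered index triple is defined by antisymmetry, e.g. p_{165} = −p_{156}, p_{265} = −p_{256}, p_{264} = −p_{246}. -/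
lemma stmt14_aux (a b c d e f g h i j k l : ℝ)
    (ha : a ≠ 0) (hd : d ≠ 0) (he : e ≠ 0) (hf : f ≠ 0) (hg : g ≠ 0)
    (hh : h ≠ 0) (hi : i ≠ 0) (hj : j ≠ 0) (hk : k ≠ 0) (hl : l ≠ 0)
    (hkey : c * i * k - a * k * l - d * i * j - d * h * l = 0) :
    b * c / (a * d * e * f * g * h * j * l) +
      b / (d * e * f * (-g) * h * i * j) +
      b / (a * e * f * g * h * k * (-l)) +
      b / (a * e * f * g * i * j * (-k)) = 0 := by
  have h2 : b * c / (a * d * e * f * g * h * j * l) +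
      b / (d * e * f * (-g) * h * i * j) +
      b / (a * e * f * g * h * k * (-l)) +
      b / (a * e * f * g * i * j * (-k)) =
      b / (a * d * e * f * g * h * i * j * k * l) *
        (c * i * k - a * k * l - d * i * j - d * h * l) := by
    field_simp
    ring
  rw [h2, hkey, mul_zero]

/-- The decoupling identity among CEGM integrands
`ℐ_{((23456),(13456))} + ℐ_{((23456),(13465))} + ℐ_{((23456),(13645))} + ℐ_{((23456),(16345))} = 0`
for the 3×3 minors `p_{ijk}` of a generic 3×6 real matrix. Indices are
0-based (`p 0 1 3` is `p_{124}`); antisymmetry (e.g. `p_{165} = −p_{156}`) holds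
automatically since `p` is a determinant of the listed columns. -/
theorem stmt14 (M : Matrix (Fin 3) (Fin 6) ℝ)
    (p : Fin 6 → Fin 6 → Fin 6 → ℝ)
    (hp : ∀ i j k, p i j k = Matrix.det (Matrix.of fun r (c : Fin 3) => M r (![i, j, k] c)))
    (hne : ∀ i j k, i < j → j < k → p i j k ≠ 0) :
    p 0 1 3 * p 0 1 4 /
        (p 0 1 2 * p 0 1 5 * p 0 2 3 * p 0 3 4 * p 0 4 5 * p 1 2 3 * p 1 3 4 * p 1 4 5) +
      p 0 1 3 / (p 0 1 5 * p 0 2 3 * p 0 3 4 * p 0 5 4 * p 1 2 3 * p 1 2 5 * p 1 3 4) +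
      p 0 1 3 / (p 0 1 2 * p 0 2 3 * p 0 3 4 * p 0 4 5 * p 1 2 3 * p 1 3 5 * p 1 5 4) +
      p 0 1 3 / (p 0 1 2 * p 0 2 3 * p 0 3 4 * p 0 4 5 * p 1 2 5 * p 1 3 4 * p 1 5 3) = 0 := by
  have h054 : p 0 5 4 = -p 0 4 5 := by
    rw [hp, hp]; simp [Matrix.det_fin_three]; ring
  have h154 : p 1 5 4 = -p 1 4 5 := by
    rw [hp, hp]; simp [Matrix.det_fin_three]; ring
  have h153 : p 1 5 3 = -p 1 3 5 := by
    rw [hp, hp]; simp [Matrix.det_fin_three]; ring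
  have hkey : p 0 1 4 * p 1 2 5 * p 1 3 5 - p 0 1 2 * p 1 3 5 * p 1 4 5
      - p 0 1 5 * p 1 2 5 * p 1 3 4 - p 0 1 5 * p 1 2 3 * p 1 4 5 = 0 := by
    simp only [hp]
    simp [Matrix.det_fin_three]
    ring
  rw [h054, h154, h153]
  exact stmt14_aux (p 0 1 2) (p 0 1 3) (p 0 1 4) (p 0 1 5) (p 0 2 3) (p 0 3 4)
    (p 0 4 5) (p 1 2 3) (p 1 2 5) (p 1 3 4) (p 1 3 5) (p 1 4 5)
    (hne 0 1 2 (by decide) (by decide)) (hne 0 1 5 (by decide) (by decide))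
    (hne 0 2 3 (by decide) (by decide)) (hne 0 3 4 (by decide) (by decide))
    (hne 0 4 5 (by decide) (by decide)) (hne 1 2 3 (by decide) (by decide))
    (hne 1 2 5 (by decide) (by decide)) (hne 1 3 4 (by decide) (by decide))
    (hne 1 3 5 (by decide) (by decide)) (hne 1 4 5 (by decide) (by decide))
    hkey
end

section
/- Let p_J denote the 3×3 minors of a generic 3×6 matrix. Then the type I CEGM integrand decomposition holds: p_{146}/(p_{123}p_{126}p_{134}p_{156}p_{264}p_{354}p_{465}) + 1/(p_{123}p_{126}p_{134}p_{256}p_{345}p_{456}) = ± 1/(p_{123}p_{134}p_{156}p_{246}p_{256}p_{345}) (with a consistent choice of sign), as rational functions on the Grassmannian G(3,6), where reordered indices obey antisymmetry (p_{264} = p_{246} up to sign, etc.). -/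
/-- Type I CEGM integrand decomposition:
`p₁₄₆/(p₁₂₃p₁₂₆p₁₃₄p₁₅₆p₂₆₄p₃₅₄p₄₆₅) + 1/(p₁₂₃p₁₂₆p₁₃₄p₂₅₆p₃₄₅p₄₅₆)
  = ± 1/(p₁₂₃p₁₃₄p₁₅₆p₂₄₆p₂₅₆p₃₄₅)` for the 3×3 minors of a generic 3×6 matrix,
indices 0-based, antisymmetry built into `p` as a determinant. -/
theorem stmt15 (M : Matrix (Fin 3) (Fin 6) ℝ)
    (p : Fin 6 → Fin 6 → Fin 6 → ℝ)
    (hp : ∀ i j k, p i j k = Matrix.det (Matrix.of fun r (c : Fin 3) => M r (![i, j, k] c)))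
    (hne : ∀ i j k, i < j → j < k → p i j k ≠ 0) :
    ∃ ε : ℝ, (ε = 1 ∨ ε = -1) ∧
      p 0 3 5 / (p 0 1 2 * p 0 1 5 * p 0 2 3 * p 0 4 5 * p 1 5 3 * p 2 4 3 * p 3 5 4) +
          1 / (p 0 1 2 * p 0 1 5 * p 0 2 3 * p 1 4 5 * p 2 3 4 * p 3 4 5) =
        ε * (1 / (p 0 1 2 * p 0 2 3 * p 0 4 5 * p 1 3 5 * p 1 4 5 * p 2 3 4)) := by
  refine ⟨-1, Or.inr rfl, ?_⟩
  have h012 := hne 0 1 2 (by decide) (by decide)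
  have h015 := hne 0 1 5 (by decide) (by decide)
  have h023 := hne 0 2 3 (by decide) (by decide)
  have h045 := hne 0 4 5 (by decide) (by decide)
  have h135 := hne 1 3 5 (by decide) (by decide)
  have h145 := hne 1 4 5 (by decide) (by decide)
  have h234 := hne 2 3 4 (by decide) (by decide)
  have h345 := hne 3 4 5 (by decide) (by decide)
  have e153 : p 1 5 3 = -p 1 3 5 := by
    rw [hp, hp]; simp [Matrix.det_fin_three, Matrix.of_apply]; ring
  have e243 : p 2 4 3 = -p 2 3 4 := by
    rw [hp, hp]; simp [Matrix.det_fin_three, Matrix.of_apply]; ring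
  have e354 : p 3 5 4 = -p 3 4 5 := by
    rw [hp, hp]; simp [Matrix.det_fin_three, Matrix.of_apply]; ring
  have h153 : p 1 5 3 ≠ 0 := by rw [e153]; simpa using h135
  have h243 : p 2 4 3 ≠ 0 := by rw [e243]; simpa using h234
  have h354 : p 3 5 4 ≠ 0 := by rw [e354]; simpa using h345
  have plucker : p 0 3 5 * p 1 4 5 = p 0 4 5 * p 1 3 5 + p 0 1 5 * p 3 4 5 := by
    simp only [hp, Matrix.det_fin_three, Matrix.of_apply]
    simp [Matrix.cons_val_zero, Matrix.cons_val_one, Matrix.head_cons]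
    ring
  have h035 : p 0 3 5 = (p 0 4 5 * p 1 3 5 + p 0 1 5 * p 3 4 5) / p 1 4 5 := by
    field_simp
    linarith [plucker]
  rw [e153, e243, e354, h035]
  field_simp
  ring
end
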